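/- Existence of a diverging subsequence with increasing successor (combinatorial core of Lemma 5 and Lemma 'r w r' k infty'). Let r : ℕ → ℝ satisfy r_n ≥ 1 for all n, and suppose there is a constant C ≥ 0 such that r_{n+1} ≤ (r_n·C + C)·e^C + r_n + 1 for all n. If limsup_{n→∞} r_n = ∞, then there exists a strictly increasing sequence of indices (n_k) with lim_{k→∞} r_{n_k} = ∞ and r_{n_k + 1} > r_{n_k} for every k. -/
import Mathlib


open Filter

theorem diverging_subsequence_with_increasing_successor
    (r : ℕ → ℝ) (hr1 : ∀ n, 1 ≤ r n)
    (C : ℝ) (hC : 0 ≤ C)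
    (hgrow : ∀ n, r (n + 1) ≤ (r n * C + C) * Real.exp C + r n + 1)
    (hlimsup : ∀ M : ℝ, ∀ N : ℕ, ∃ n : ℕ, N ≤ n ∧ M ≤ r n) :
    ∃ φ : ℕ → ℕ, StrictMono φ ∧
      Tendsto (fun k => r (φ k)) atTop atTop ∧
      ∀ k : ℕ, r (φ k) < r (φ k + 1) := by
  have key : ∀ (M : ℝ) (N : ℕ), ∃ m, N ≤ m ∧ M ≤ r m ∧ r m < r (m + 1) := by
    intro M N
    set K : ℝ := max ((M * C + C) * Real.exp C + M + 1) (r N + 1) with hK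
    have hex : ∃ n, N + 1 ≤ n ∧ K ≤ r n := hlimsup K (N + 1)
    classical
    set n0 := Nat.find hex with hn0
    obtain ⟨hn0N, hn0K⟩ := Nat.find_spec hex
    set m := n0 - 1 with hm
    have hmN : N ≤ m := by omega
    have hm1 : m + 1 = n0 := by omega
    have hrmK : r m < K := by
      by_cases hc : N + 1 ≤ m
      · have := Nat.find_min hex (m := m) (by omega)
        push_neg at this
        exact this hc
      · have : m = N := by omega
        rw [this]
        exact lt_of_lt_of_le (by linarith) (le_max_right _ _)
    have hlt : r m < r (m + 1) := by
      rw [hm1]; exact lt_of_lt_of_le hrmK hn0K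
    refine ⟨m, hmN, ?_, hlt⟩
    by_contra hMm
    push_neg at hMm
    have hexp : 0 < Real.exp C := Real.exp_pos C
    have h1 : r (m + 1) ≤ (r m * C + C) * Real.exp C + r m + 1 := hgrow m
    have h2 : (r m * C + C) * Real.exp C ≤ (M * C + C) * Real.exp C := by
      have : r m * C ≤ M * C := mul_le_mul_of_nonneg_right hMm.le hC
      nlinarith
    have h3 : r (m + 1) < (M * C + C) * Real.exp C + M + 1 := by linarith
    have h4 : r (m + 1) < K := lt_of_lt_of_le h3 (le_max_left _ _)
    rw [hm1] at h4
    exact absurd hn0K (not_le.mpr h4)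
  choose g hg1 hg2 hg3 using key
  set φ : ℕ → ℕ := fun k => Nat.rec (g 0 0) (fun k prev => g ((k : ℝ) + 1) (prev + 1)) k with hφ
  have hφsucc : ∀ k, φ (k + 1) = g ((k : ℝ) + 1) (φ k + 1) := fun k => rfl
  have hφmono : StrictMono φ := by
    apply strictMono_nat_of_lt_succ
    intro k
    rw [hφsucc]
    have := hg1 ((k : ℝ) + 1) (φ k + 1)
    omega
  have hlb : ∀ k : ℕ, (k : ℝ) ≤ r (φ k) := by
    intro k
    cases k with
    | zero => exact le_trans (by norm_num) (hg2 0 0)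
    | succ k =>
      rw [hφsucc]
      push_cast
      exact hg2 ((k : ℝ) + 1) (φ k + 1)
  refine ⟨φ, hφmono, ?_, ?_⟩
  · exact tendsto_atTop_mono hlb tendsto_natCast_atTop_atTop
  · intro k
    cases k with
    | zero => exact hg3 0 0
    | succ k => rw [hφsucc]; exact hg3 ((k : ℝ) + 1) (φ k + 1)
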